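/- Let θ_1, ..., θ_d be rational numbers in the open interval (0,1), and let a_1, ..., a_d, β_1, ..., β_d be real numbers such that the purely periodic sequence u_n = Σ_{i=1}^d a_i cos(2π θ_i n + β_i) is not identically zero. Then the sequence (u_n) attains a strictly positive value and a strictly negative value, i.e. there exist n, n' ∈ ℕ with u_n > 0 and u_{n'} < 0. -/
import Mathlib
open Real Finset

lemma cos_sum_zero' (N : ℕ) (x b : ℝ) (h1 : Complex.exp ((x : ℂ) * Complex.I) ≠ 1)
    (hN : Complex.exp ((x : ℂ) * Complex.I) ^ N = 1) :
    ∑ n ∈ Finset.range N, Real.cos (x * n + b) = 0 := by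
  have key : ∀ n : ℕ, Real.cos (x * n + b) =
      (Complex.exp ((x:ℂ) * Complex.I) ^ n * Complex.exp ((b:ℂ) * Complex.I)).re := by
    intro n
    rw [← Complex.exp_nat_mul, ← Complex.exp_add]
    have : (n : ℂ) * ((x:ℂ) * Complex.I) + (b:ℂ) * Complex.I = ((x * n + b : ℝ) : ℂ) * Complex.I := by
      push_cast; ring
    rw [this, Complex.exp_ofReal_mul_I_re]
  simp_rw [key]
  rw [← Complex.re_sum, ← Finset.sum_mul, geom_sum_eq h1, hN]
  simp

theorem rational_trigonometric_sum_attains_pos_and_neg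
    (d : ℕ) (θ : Fin d → ℚ) (hθ : ∀ i, 0 < θ i ∧ θ i < 1)
    (a β : Fin d → ℝ) (u : ℕ → ℝ)
    (hu : ∀ n : ℕ, u n = ∑ i : Fin d, a i * Real.cos (2 * π * (θ i : ℝ) * n + β i))
    (hune : ∃ n : ℕ, u n ≠ 0) :
    (∃ n : ℕ, 0 < u n) ∧ (∃ n' : ℕ, u n' < 0) := by
  set N : ℕ := ∏ i : Fin d, (θ i).den with hNdef
  have hNpos : 0 < N := Finset.prod_pos (fun i _ => (θ i).pos)
  have hdvd : ∀ i, (θ i).den ∣ N := fun i => Finset.dvd_prod_of_mem _ (Finset.mem_univ i)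
  have hm : ∀ i, ∃ m : ℤ, (m : ℝ) = (θ i : ℝ) * N := by
    intro i
    obtain ⟨k, hk⟩ := hdvd i
    refine ⟨(θ i).num * k, ?_⟩
    have hq : ((θ i).num : ℚ) = θ i * (θ i).den := by
      have h := Rat.num_div_den (θ i)
      have hden : ((θ i).den : ℚ) ≠ 0 := Nat.cast_ne_zero.mpr (θ i).den_nz
      rw [div_eq_iff hden] at h
      exact h.symm ▸ rfl
    have h1 : ((θ i).num : ℝ) = (θ i : ℝ) * (θ i).den := by exact_mod_cast hq
    push_cast [hk]
    rw [h1]; ring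
  choose m hmR using hm
  have hsum : ∑ n ∈ Finset.range N, u n = 0 := by
    simp_rw [hu]
    rw [Finset.sum_comm]
    apply Finset.sum_eq_zero
    intro i _
    rw [← Finset.mul_sum]
    have h1 : Complex.exp ((2 * π * (θ i : ℝ) : ℝ) * Complex.I) ≠ 1 := by
      intro hcontra
      rw [Complex.exp_eq_one_iff] at hcontra
      obtain ⟨k, hk⟩ := hcontra
      have hreal : 2 * π * (θ i : ℝ) = (k : ℝ) * (2 * π) := by
        have h2 : ((2 * π * (θ i : ℝ) : ℝ) : ℂ) * Complex.I
            = (((k : ℝ) * (2 * π) : ℝ) : ℂ) * Complex.I := by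
          rw [hk]; push_cast; ring
        have h3 := mul_right_cancel₀ Complex.I_ne_zero h2
        exact_mod_cast h3
      have hθk : (θ i : ℝ) = (k : ℝ) := by
        have hπ : (0:ℝ) < π := Real.pi_pos
        nlinarith
      obtain ⟨h0, h1⟩ := hθ i
      have h0' : (0 : ℝ) < (θ i : ℝ) := by exact_mod_cast h0
      have h1' : ((θ i : ℝ)) < 1 := by exact_mod_cast h1
      rw [hθk] at h0' h1'
      have hk0 : (0 : ℤ) < k := by exact_mod_cast h0'
      have hk1 : k < 1 := by exact_mod_cast h1'
      omega
    have hN1 : Complex.exp ((2 * π * (θ i : ℝ) : ℝ) * Complex.I) ^ N = 1 := by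
      rw [← Complex.exp_nat_mul]
      have hC : ((m i : ℤ) : ℂ) = ((θ i : ℝ) : ℂ) * N := by exact_mod_cast hmR i
      have : (N : ℂ) * (((2 * π * (θ i : ℝ) : ℝ)) * Complex.I) = (m i : ℂ) * (2 * π * Complex.I) := by
        rw [hC]; push_cast; ring
      rw [this, Complex.exp_int_mul_two_pi_mul_I]
    have := cos_sum_zero' N (2 * π * (θ i : ℝ)) (β i) h1 hN1
    rw [this, mul_zero]
  have hper : ∀ n : ℕ, u n = u (n % N) := by
    intro n
    obtain ⟨q, hqn⟩ : ∃ q, n = n % N + N * q := ⟨n / N, (Nat.mod_add_div n N).symm⟩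
    rw [hu, hu]
    apply Finset.sum_congr rfl
    intro i _
    congr 1
    have hOn : (n : ℝ) = (n % N : ℕ) + (N : ℝ) * q := by exact_mod_cast congrArg (Nat.cast (R := ℝ)) hqn
    have harg : 2 * π * (θ i : ℝ) * n + β i =
        2 * π * (θ i : ℝ) * (n % N : ℕ) + β i + ((q * m i : ℤ) : ℝ) * (2 * π) := by
      push_cast
      rw [hmR i, hOn]
      ring
    rw [harg, Real.cos_add_int_mul_two_pi]
  obtain ⟨n0, hn0⟩ := hune
  have hmem : n0 % N ∈ Finset.range N := Finset.mem_range.mpr (Nat.mod_lt _ hNpos)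
  have hn0' : u (n0 % N) ≠ 0 := by rw [← hper]; exact hn0
  constructor
  · by_contra h
    push_neg at h
    rcases lt_or_eq_of_le (h (n0 % N)) with hlt | heq
    · have : ∑ n ∈ Finset.range N, u n < ∑ n ∈ Finset.range N, (0 : ℝ) :=
        Finset.sum_lt_sum (fun i _ => h i) ⟨n0 % N, hmem, hlt⟩
      simp [hsum] at this
    · exact hn0' heq
  · by_contra h
    push_neg at h
    rcases lt_or_eq_of_le (h (n0 % N)) with hlt | heq
    · have : ∑ n ∈ Finset.range N, (0 : ℝ) < ∑ n ∈ Finset.range N, u n :=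
        Finset.sum_lt_sum (fun i _ => h i) ⟨n0 % N, hmem, hlt⟩
      simp [hsum] at this
    · exact hn0' heq.symm
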